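/- Let d ≥ 1, c₂ > 0, c₃ ≥ 0 and c₄ > 0. Then there exist c₇ ≥ 0 and c₈ > 0 such that for all s, t with 0 < s ≤ t ≤ 1, all x, y ∈ ℝ^d, and every nonnegative measurable function ρ : ℝ^d → ℝ with ∫_{ℝ^d} ρ(z) dz ≤ 1 and ρ(z) ≤ c₃ s^{−d/2} exp(−c₄‖z−x‖²/s) for all z ∈ ℝ^d, one has ∫_{ℝ^d} exp(−c₂‖z−y‖²/t) ρ(z) dz ≤ c₇ exp(−c₈‖x−y‖²/t). -/

import Mathlib

open MeasureTheory Real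

noncomputable section

/-- `ℝ^d` with the Euclidean norm. -/
abbrev Eu (d : ℕ) := EuclideanSpace ℝ (Fin d)

/-- Iterated partial derivative along a list of coordinate directions. -/
noncomputable def pderivs {d : ℕ} : List (Fin d) → (Eu d → ℝ) → Eu d → ℝ
  | [], f => f
  | i :: l, f => pderivs l fun x => fderiv ℝ f x (EuclideanSpace.single i 1)

/-- The list of coordinates (with multiplicities) associated to a multi-index `m : ℕ^d`. -/
def mToList {d : ℕ} (m : Fin d → ℕ) : List (Fin d) :=
  (List.finRange d).flatMap fun i => List.replicate (m i) i

/-- The partial derivative `∂^m` associated to a multi-index `m : ℕ^d`. -/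
noncomputable def pderivM {d : ℕ} (m : Fin d → ℕ) (f : Eu d → ℝ) : Eu d → ℝ :=
  pderivs (mToList m) f

/-- The length `|m| = m₁ + ⋯ + m_d` of a multi-index. -/
def mlen {d : ℕ} (m : Fin d → ℕ) : ℕ := ∑ i, m i

/-- Mixed partial derivative `∂_x^α ∂_y^β f(x,y)` of a function of two `ℝ^d` variables. -/
noncomputable def D2 {d : ℕ} (α β : Fin d → ℕ) (f : Eu d → Eu d → ℝ) (x y : Eu d) : ℝ :=
  pderivM α (fun x' => pderivM β (f x') y) x

/-- Estimate (58) of the paper: if `ρ` is a sub-probability density concentrated around `x` at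
scale `s ≤ t`, then `∫ exp(-c₂‖z-y‖²/t) ρ(z) dz ≤ c₇ exp(-c₈‖x-y‖²/t)`. -/
lemma integrable_rexp_gauss {d : ℕ} {b : ℝ} (hb : 0 < b) (x : Eu d) :
    Integrable fun z : Eu d => rexp (-b * ‖z - x‖ ^ 2) := by
  have h := (GaussianFourier.integrable_cexp_neg_mul_sq_norm_add (V := Eu d) (b := (b : ℂ))
    (by simpa using hb) 0 (0 : Eu d)).norm
  have h2 : Integrable fun z : Eu d => rexp (-b * ‖z‖ ^ 2) := by
    convert h using 2 with z
    rw [Complex.norm_exp]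
    norm_num
    exact Or.inl (by norm_cast)
  exact h2.comp_sub_right x

lemma integral_rexp_gauss {d : ℕ} {b : ℝ} (hb : 0 < b) (x : Eu d) :
    ∫ z : Eu d, rexp (-b * ‖z - x‖ ^ 2) = (π / b) ^ ((d : ℝ) / 2) := by
  rw [integral_sub_right_eq_self (fun z : Eu d => rexp (-b * ‖z‖ ^ 2)) x]
  rw [GaussianFourier.integral_rexp_neg_mul_sq_norm hb]
  norm_num [finrank_euclideanSpace]

set_option maxHeartbeats 1000000 in
theorem statement9 (d : ℕ) (hd : 1 ≤ d) (c₂ : ℝ) (hc₂ : 0 < c₂)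
    (c₃ : ℝ) (hc₃ : 0 ≤ c₃) (c₄ : ℝ) (hc₄ : 0 < c₄) :
    ∃ c₇ ≥ (0:ℝ), ∃ c₈ > (0:ℝ), ∀ s t : ℝ, 0 < s → s ≤ t → t ≤ 1 → ∀ x y : Eu d,
      ∀ ρ : Eu d → ℝ, Measurable ρ → (∀ z, 0 ≤ ρ z) → (∫ z : Eu d, ρ z) ≤ 1 →
        (∀ z : Eu d, ρ z ≤ c₃ * s ^ (-(d : ℝ) / 2) * Real.exp (-c₄ * ‖z - x‖ ^ 2 / s)) →
        ∫ z : Eu d, Real.exp (-c₂ * ‖z - y‖ ^ 2 / t) * ρ z ≤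
          c₇ * Real.exp (-c₈ * ‖x - y‖ ^ 2 / t) := by
  refine ⟨1 + c₃ * (2 * π / c₄) ^ ((d : ℝ) / 2), by positivity,
    min (c₂ / 4) (c₄ / 8), by positivity, ?_⟩
  intro s t hs hst ht1 x y ρ hρm hρ0 hρ1 hρb
  set c₈ : ℝ := min (c₂ / 4) (c₄ / 8) with hc₈def
  have hc₈ : 0 < c₈ := by positivity
  have hc₈a : c₈ ≤ c₂ / 4 := min_le_left _ _
  have hc₈b : c₈ ≤ c₄ / 8 := min_le_right _ _
  have ht : 0 < t := lt_of_lt_of_le hs hst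
  set E : ℝ := rexp (-c₈ * ‖x - y‖ ^ 2 / t) with hEdef
  have hE : 0 < E := exp_pos _
  set K : ℝ := c₃ * s ^ (-(d : ℝ) / 2) with hKdef
  have hK : 0 ≤ K := by positivity
  have hb2 : (0:ℝ) < c₄ / (2 * s) := by positivity
  set G : Eu d → ℝ := fun z => rexp (-(c₄ / (2 * s)) * ‖z - x‖ ^ 2) with hGdef
  have hGpos : ∀ z, 0 < G z := fun z => exp_pos _
  set g : Eu d → ℝ := fun z => ρ z + K * G z with hgdef
  -- the density bound, weakened to a half-width Gaussian
  have hρb2 : ∀ z, ρ z ≤ K * (G z * G z) := by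
    intro z
    have e1 : -c₄ * ‖z - x‖ ^ 2 / s =
        (-(c₄ / (2 * s)) * ‖z - x‖ ^ 2) + (-(c₄ / (2 * s)) * ‖z - x‖ ^ 2) := by
      field_simp; ring
    calc ρ z ≤ K * rexp (-c₄ * ‖z - x‖ ^ 2 / s) := hρb z
      _ = K * (G z * G z) := by rw [e1, exp_add]
  -- pointwise bound
  have key : ∀ z : Eu d, rexp (-c₂ * ‖z - y‖ ^ 2 / t) * ρ z ≤ E * g z := by
    intro z
    have hKG : (0:ℝ) ≤ K * G z := by positivity
    rcases le_or_gt (‖x - y‖ / 2) (‖z - y‖) with hcase | hcase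
    · -- z far from y
      have h1 : ‖x - y‖ ^ 2 / 4 ≤ ‖z - y‖ ^ 2 := by
        nlinarith [norm_nonneg (x - y), norm_nonneg (z - y)]
      have hmul : c₈ * ‖x - y‖ ^ 2 ≤ c₂ * ‖z - y‖ ^ 2 := by
        nlinarith [mul_le_mul_of_nonneg_right hc₈a (sq_nonneg ‖x - y‖),
          mul_le_mul_of_nonneg_left h1 hc₂.le]
      have h2 : rexp (-c₂ * ‖z - y‖ ^ 2 / t) ≤ E := by
        rw [hEdef, exp_le_exp, neg_mul, neg_mul, neg_div, neg_div, neg_le_neg_iff,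
          div_le_div_iff₀ ht ht]
        nlinarith [mul_le_mul_of_nonneg_right hmul ht.le]
      calc rexp (-c₂ * ‖z - y‖ ^ 2 / t) * ρ z ≤ E * ρ z :=
            mul_le_mul_of_nonneg_right h2 (hρ0 z)
        _ ≤ E * g z :=
            mul_le_mul_of_nonneg_left (le_add_of_nonneg_right hKG) hE.le
    · -- z close to y, hence far from x
      have htri : ‖x - y‖ ≤ ‖x - z‖ + ‖z - y‖ := by
        calc ‖x - y‖ = ‖(x - z) + (z - y)‖ := by rw [sub_add_sub_cancel]
          _ ≤ ‖x - z‖ + ‖z - y‖ := norm_add_le _ _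
      have hzx : ‖x - y‖ / 2 ≤ ‖z - x‖ := by rw [norm_sub_rev z x]; linarith
      have h1 : ‖x - y‖ ^ 2 / 4 ≤ ‖z - x‖ ^ 2 := by
        nlinarith [norm_nonneg (x - y), norm_nonneg (z - x)]
      have hle1 : rexp (-c₂ * ‖z - y‖ ^ 2 / t) ≤ 1 := by
        rw [Real.exp_le_one_iff, neg_mul, neg_div]
        exact neg_nonpos.mpr (by positivity)
      have hcomp : -(c₄ / (2 * s)) * ‖z - x‖ ^ 2 ≤ -c₈ * ‖x - y‖ ^ 2 / t := by
        have e1 : c₈ * ‖x - y‖ ^ 2 ≤ (c₄ / 2) * ‖z - x‖ ^ 2 := by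
          nlinarith [sq_nonneg ‖x - y‖]
        have e2 : c₈ * ‖x - y‖ ^ 2 / t ≤ (c₄ / 2) * ‖z - x‖ ^ 2 / t := by gcongr
        have e3 : (c₄ / 2) * ‖z - x‖ ^ 2 / t ≤ (c₄ / 2) * ‖z - x‖ ^ 2 / s := by
          gcongr
        have e4 : (c₄ / 2) * ‖z - x‖ ^ 2 / s = (c₄ / (2 * s)) * ‖z - x‖ ^ 2 := by
          field_simp
        rw [neg_mul, neg_mul, neg_div, neg_le_neg_iff]
        calc c₈ * ‖x - y‖ ^ 2 / t ≤ (c₄ / 2) * ‖z - x‖ ^ 2 / s := le_trans e2 e3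
          _ = c₄ / (2 * s) * ‖z - x‖ ^ 2 := e4
      have hGE : G z ≤ E := by rw [hGdef, hEdef]; exact exp_le_exp.mpr hcomp
      calc rexp (-c₂ * ‖z - y‖ ^ 2 / t) * ρ z ≤ 1 * ρ z :=
            mul_le_mul_of_nonneg_right hle1 (hρ0 z)
        _ = ρ z := one_mul _
        _ ≤ K * (G z * G z) := hρb2 z
        _ ≤ K * (G z * E) := by
            apply mul_le_mul_of_nonneg_left _ hK
            exact mul_le_mul_of_nonneg_left hGE (hGpos z).le
        _ = E * (K * G z) := by ring
        _ ≤ E * g z :=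
            mul_le_mul_of_nonneg_left (le_add_of_nonneg_left (hρ0 z)) hE.le
  -- integrability
  have hGint : Integrable G := integrable_rexp_gauss hb2 x
  have hρint : Integrable ρ := by
    apply Integrable.mono' (hGint.const_mul K) hρm.aestronglyMeasurable
    filter_upwards with z
    rw [Real.norm_eq_abs, abs_of_nonneg (hρ0 z)]
    calc ρ z ≤ K * (G z * G z) := hρb2 z
      _ ≤ K * (G z * 1) := by
          apply mul_le_mul_of_nonneg_left _ hK
          apply mul_le_mul_of_nonneg_left _ (hGpos z).le
          rw [hGdef, Real.exp_le_one_iff, neg_mul]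
          exact neg_nonpos.mpr (by positivity)
      _ = K * G z := by ring
  have hgint : Integrable g := hρint.add (hGint.const_mul K)
  have hcontexp : Continuous fun z : Eu d => rexp (-c₂ * ‖z - y‖ ^ 2 / t) :=
    Real.continuous_exp.comp
      ((continuous_const.mul (((continuous_id.sub continuous_const).norm).pow 2)).div_const t)
  have hLint : Integrable (fun z : Eu d => rexp (-c₂ * ‖z - y‖ ^ 2 / t) * ρ z) := by
    apply Integrable.mono' hρint (hcontexp.measurable.mul hρm).aestronglyMeasurable
    filter_upwards with z
    simp only [Pi.mul_apply]
    rw [Real.norm_eq_abs, abs_of_nonneg (mul_nonneg (exp_pos _).le (hρ0 z))]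
    have h1 : rexp (-c₂ * ‖z - y‖ ^ 2 / t) ≤ 1 := by
      rw [Real.exp_le_one_iff, neg_mul, neg_div]
      exact neg_nonpos.mpr (by positivity)
    exact (mul_le_mul_of_nonneg_right h1 (hρ0 z)).trans_eq (one_mul _)
  -- value of the Gaussian integral
  have hGval : K * ∫ z : Eu d, G z = c₃ * (2 * π / c₄) ^ ((d : ℝ) / 2) := by
    rw [hGdef, integral_rexp_gauss hb2 x]
    have e1 : π / (c₄ / (2 * s)) = (2 * π / c₄) * s := by field_simp
    rw [e1, Real.mul_rpow (by positivity) hs.le, hKdef]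
    rw [show c₃ * s ^ (-(d:ℝ)/2) * ((2 * π / c₄) ^ ((d:ℝ)/2) * s ^ ((d:ℝ)/2)) =
      c₃ * (2 * π / c₄) ^ ((d:ℝ)/2) * (s ^ (-(d:ℝ)/2) * s ^ ((d:ℝ)/2)) from by ring]
    rw [← Real.rpow_add hs, show -(d:ℝ)/2 + (d:ℝ)/2 = 0 by ring, Real.rpow_zero, mul_one]
  calc ∫ z : Eu d, rexp (-c₂ * ‖z - y‖ ^ 2 / t) * ρ z
      ≤ ∫ z : Eu d, E * g z := integral_mono hLint (hgint.const_mul E) key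
    _ = E * ∫ z : Eu d, g z := integral_const_mul E g
    _ = E * ((∫ z : Eu d, ρ z) + K * ∫ z : Eu d, G z) := by
        rw [hgdef, integral_add hρint (hGint.const_mul K), integral_const_mul]
    _ ≤ E * (1 + c₃ * (2 * π / c₄) ^ ((d : ℝ) / 2)) := by
        apply mul_le_mul_of_nonneg_left _ hE.le
        rw [hGval]
        linarith
    _ = (1 + c₃ * (2 * π / c₄) ^ ((d : ℝ) / 2)) * rexp (-c₈ * ‖x - y‖ ^ 2 / t) := by
        rw [hEdef]; ring
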